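/- Let λ₁, …, λ_d be complex numbers with |λ₁| > max(1, |λ₂|, …, |λ_d|). Suppose Fix : ℕ → ℕ satisfies Fix(m) = |1 − (λ₁^m + ⋯ + λ_d^m)| for all m ≥ 1. Then there exists m₀ such that for all m ≥ m₀, Fix(m) > ∑_{k ∣ m, m/k prime, k ≠ m} Fix(k). -/

import Mathlib

open Finset

theorem stmt_14 (d : ℕ) (hd : 0 < d) (lam : Fin d → ℂ)
    (h1 : 1 < ‖lam ⟨0, hd⟩‖)
    (hgap : ∀ i : Fin d, i ≠ ⟨0, hd⟩ → ‖lam i‖ < ‖lam ⟨0, hd⟩‖)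
    (Fix : ℕ → ℕ)
    (hFix : ∀ m : ℕ, 1 ≤ m → (Fix m : ℝ) = ‖1 - ∑ i, lam i ^ m‖) :
    ∃ m₀ : ℕ, ∀ m : ℕ, m₀ ≤ m →
      (∑ k ∈ m.divisors.filter (fun k => k ≠ m ∧ (m / k).Prime), Fix k) < Fix m := by
  classical
  set i0 : Fin d := ⟨0, hd⟩ with hi0
  set r : ℝ := ‖lam i0‖ with hrdef
  have hr1 : 1 < r := h1
  have hr0 : 0 < r := lt_trans one_pos hr1
  set t : ℝ := Real.sqrt r with htdef
  have ht0 : 0 < t := Real.sqrt_pos.mpr hr0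
  have ht1 : 1 < t := by
    rw [htdef, show (1:ℝ) = Real.sqrt 1 by simp]
    exact Real.sqrt_lt_sqrt (by norm_num) hr1
  have htsq : t ^ 2 = r := Real.sq_sqrt hr0.le
  have htr : t < r := by nlinarith
  -- ρ : bound on the other eigenvalues, at least 1
  set S : Finset ℝ := insert 1 ((univ.erase i0).image (fun i => ‖lam i‖)) with hS
  have hSne : S.Nonempty := insert_nonempty _ _
  set ρ : ℝ := S.max' hSne with hρdef
  have hρ1 : 1 ≤ ρ := Finset.le_max' _ _ (mem_insert_self _ _)
  have hρ0 : 0 ≤ ρ := le_trans zero_le_one hρ1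
  have hρr : ρ < r := by
    rw [hρdef, Finset.max'_lt_iff]
    intro b hb
    rcases mem_insert.mp hb with h | h
    · subst h; exact hr1
    · obtain ⟨i, hi, rfl⟩ := mem_image.mp h
      exact hgap i (mem_erase.mp hi).1
  have hρle : ∀ i, i ≠ i0 → ‖lam i‖ ≤ ρ := by
    intro i hi
    apply Finset.le_max'
    rw [hS]
    exact mem_insert_of_mem (mem_image_of_mem _ (mem_erase.mpr ⟨hi, mem_univ i⟩))
  -- all eigenvalues bounded by r
  have habs_le_r : ∀ i, ‖lam i‖ ≤ r := by
    intro i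
    by_cases h : i = i0
    · subst h; exact le_refl _
    · exact (hgap i h).le
  -- the limit
  have hlim : Filter.Tendsto
      (fun m : ℕ => (d : ℝ) * (ρ / r) ^ m + (1 + d) * ((m : ℝ) * (t / r) ^ m))
      Filter.atTop (nhds 0) := by
    have h1' : Filter.Tendsto (fun m : ℕ => (ρ / r) ^ m) Filter.atTop (nhds 0) :=
      tendsto_pow_atTop_nhds_zero_of_lt_one (by positivity) (by
        rw [div_lt_one hr0]; exact hρr)
    have h2' : Filter.Tendsto (fun m : ℕ => (m : ℝ) * (t / r) ^ m) Filter.atTop (nhds 0) :=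
      tendsto_self_mul_const_pow_of_lt_one (by positivity) (by
        rw [div_lt_one hr0]; exact htr)
    have := (h1'.const_mul (d : ℝ)).add (h2'.const_mul (1 + (d : ℝ)))
    simpa using this
  have hev : ∀ᶠ m : ℕ in Filter.atTop,
      (d : ℝ) * (ρ / r) ^ m + (1 + d) * ((m : ℝ) * (t / r) ^ m) < 1 :=
    hlim.eventually_lt_const one_pos
  obtain ⟨m₁, hm₁⟩ := Filter.eventually_atTop.mp hev
  refine ⟨max m₁ 1, fun m hm => ?_⟩
  have hm1 : 1 ≤ m := le_trans (le_max_right _ _) hm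
  have hmm₁ : m₁ ≤ m := le_trans (le_max_left _ _) hm
  have hm0 : m ≠ 0 := Nat.one_le_iff_ne_zero.mp hm1
  -- key numeric inequality
  have hkey : (d : ℝ) * ρ ^ m + (1 + d) * ((m : ℝ) * t ^ m) < r ^ m := by
    have h := hm₁ m hmm₁
    have hrm : (0 : ℝ) < r ^ m := pow_pos hr0 m
    have heq : (d : ℝ) * ρ ^ m + (1 + d) * ((m : ℝ) * t ^ m)
        = ((d : ℝ) * (ρ / r) ^ m + (1 + d) * ((m : ℝ) * (t / r) ^ m)) * r ^ m := by
      rw [div_pow, div_pow]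
      field_simp
    rw [heq]
    calc ((d : ℝ) * (ρ / r) ^ m + (1 + d) * ((m : ℝ) * (t / r) ^ m)) * r ^ m
        < 1 * r ^ m := mul_lt_mul_of_pos_right h hrm
      _ = r ^ m := one_mul _
  have hρpow1 : (1 : ℝ) ≤ ρ ^ m := by
    calc (1 : ℝ) = 1 ^ m := (one_pow m).symm
      _ ≤ ρ ^ m := pow_le_pow_left₀ zero_le_one hρ1 m
  have htpow1 : (1 : ℝ) ≤ t ^ m := by
    calc (1 : ℝ) = 1 ^ m := (one_pow m).symm
      _ ≤ t ^ m := pow_le_pow_left₀ zero_le_one ht1.le m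
  -- lower bound on Fix m
  have hFixm : r ^ m - (d : ℝ) * ρ ^ m ≤ (Fix m : ℝ) := by
    rw [hFix m hm1]
    have hsplit : ∑ i, lam i ^ m = lam i0 ^ m + ∑ i ∈ univ.erase i0, lam i ^ m :=
      (Finset.add_sum_erase _ _ (mem_univ i0)).symm
    set B : ℂ := ∑ i ∈ univ.erase i0, lam i ^ m with hB
    have hBle : ‖B‖ ≤ ((d : ℝ) - 1) * ρ ^ m := by
      calc ‖B‖ ≤ ∑ i ∈ univ.erase i0, ‖lam i ^ m‖ :=
            norm_sum_le _ _
        _ ≤ ∑ _i ∈ univ.erase i0, ρ ^ m := by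
            refine Finset.sum_le_sum fun i hi => ?_
            rw [norm_pow]
            exact pow_le_pow_left₀ (norm_nonneg _) (hρle i (mem_erase.mp hi).1) m
        _ = ((d : ℝ) - 1) * ρ ^ m := by
            rw [Finset.sum_const, nsmul_eq_mul]
            congr 1
            rw [Finset.card_erase_of_mem (mem_univ i0), Finset.card_univ, Fintype.card_fin,
              Nat.cast_sub hd, Nat.cast_one]
    have h1B : ‖1 - B‖ ≤ 1 + ‖B‖ := by
      simpa [sub_eq_add_neg, map_neg_eq_map] using norm_add_le 1 (-B)
    have htri : r ^ m ≤ ‖1 - ∑ i, lam i ^ m‖ + (1 + ‖B‖) := by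
      have hrepr : lam i0 ^ m = ((∑ i, lam i ^ m) - 1) + (1 - B) := by
        rw [hsplit]; ring
      calc r ^ m = ‖lam i0 ^ m‖ := (norm_pow _ m).symm
        _ = ‖((∑ i, lam i ^ m) - 1) + (1 - B)‖ := by rw [← hrepr]
        _ ≤ ‖(∑ i, lam i ^ m) - 1‖ + ‖1 - B‖ :=
            norm_add_le _ _
        _ = ‖1 - ∑ i, lam i ^ m‖ + ‖1 - B‖ := by
            rw [norm_sub_rev]
        _ ≤ ‖1 - ∑ i, lam i ^ m‖ + (1 + ‖B‖) := by linarith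
    have hdρ : ((d : ℝ) - 1) * ρ ^ m + 1 ≤ (d : ℝ) * ρ ^ m := by nlinarith
    linarith
  -- upper bound on each Fix k in the sum
  set F : Finset ℕ := m.divisors.filter (fun k => k ≠ m ∧ (m / k).Prime) with hF
  have hup : ∀ k ∈ F, (Fix k : ℝ) ≤ (1 + d) * t ^ m := by
    intro k hk
    rw [hF, mem_filter, Nat.mem_divisors] at hk
    obtain ⟨⟨hkdvd, _⟩, hkne, _⟩ := hk
    have hk1 : 1 ≤ k := Nat.pos_of_dvd_of_pos hkdvd (Nat.pos_of_ne_zero hm0)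
    have h2k : 2 * k ≤ m := by
      obtain ⟨c, hc⟩ := hkdvd
      have hc0 : c ≠ 0 := by rintro rfl; simp at hc; exact hm0 hc
      have hc1 : c ≠ 1 := by rintro rfl; simp at hc; exact hkne hc.symm
      have : 2 ≤ c := by omega
      calc 2 * k = k * 2 := by ring
        _ ≤ k * c := Nat.mul_le_mul_left k this
        _ = m := hc.symm
    have hrk : r ^ k ≤ t ^ m := by
      calc r ^ k = (t ^ 2) ^ k := by rw [htsq]
        _ = t ^ (2 * k) := by rw [← pow_mul]
        _ ≤ t ^ m := pow_le_pow_right₀ ht1.le h2k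
    rw [hFix k hk1]
    calc ‖1 - ∑ i, lam i ^ k‖
        ≤ ‖(1:ℂ)‖ + ‖∑ i, lam i ^ k‖ := by
          simpa [sub_eq_add_neg, map_neg_eq_map] using
            norm_add_le 1 (-(∑ i, lam i ^ k))
      _ ≤ 1 + ∑ i, ‖lam i ^ k‖ := by
          rw [norm_one]
          exact add_le_add_right (norm_sum_le _ _) 1
      _ ≤ 1 + ∑ _i : Fin d, r ^ k := by
          refine add_le_add_right (Finset.sum_le_sum fun i _ => ?_) 1
          rw [norm_pow]
          exact pow_le_pow_left₀ (norm_nonneg _) (habs_le_r i) k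
      _ = 1 + (d : ℝ) * r ^ k := by
          rw [Finset.sum_const, card_univ, Fintype.card_fin, nsmul_eq_mul]
      _ ≤ t ^ m + (d : ℝ) * t ^ m :=
          add_le_add htpow1 (mul_le_mul_of_nonneg_left hrk (Nat.cast_nonneg d))
      _ = (1 + d) * t ^ m := by ring
  -- cardinality bound
  have hcard : F.card ≤ m := by
    have hsub : F ⊆ Finset.Icc 1 m := by
      intro k hk
      rw [hF, mem_filter, Nat.mem_divisors] at hk
      exact Finset.mem_Icc.mpr
        ⟨Nat.pos_of_dvd_of_pos hk.1.1 (Nat.pos_of_ne_zero hm0),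
          Nat.le_of_dvd (Nat.pos_of_ne_zero hm0) hk.1.1⟩
    calc F.card ≤ (Finset.Icc 1 m).card := Finset.card_le_card hsub
      _ = m := by rw [Nat.card_Icc]; omega
  -- conclusion
  rw [← Nat.cast_lt (α := ℝ), Nat.cast_sum]
  calc ∑ k ∈ F, (Fix k : ℝ)
      ≤ F.card • ((1 + (d : ℝ)) * t ^ m) := Finset.sum_le_card_nsmul _ _ _ hup
    _ = (F.card : ℝ) * ((1 + d) * t ^ m) := nsmul_eq_mul _ _
    _ ≤ (m : ℝ) * ((1 + d) * t ^ m) := by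
        refine mul_le_mul_of_nonneg_right ?_ (by positivity)
        exact_mod_cast hcard
    _ = (1 + d) * ((m : ℝ) * t ^ m) := by ring
    _ < r ^ m - (d : ℝ) * ρ ^ m := by linarith
    _ ≤ (Fix m : ℝ) := hFixm
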